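/- Let n ≥ 2 be an integer. For 1 ≤ j ≤ n set q_j = (n + 1 − 2j)/(2n) ∈ ℚ. Let σ be a permutation of {1, …, n} and let k₁, …, k_n be integers with k₁ + ⋯ + k_n = 0. Define x_i = q_{σ(i)} + k_i for 1 ≤ i ≤ n. If 0 ≤ x_i − x_{i+1} ≤ 1/n for all 1 ≤ i ≤ n − 1, then x_i = q_i for all i. -/

import Mathlib

/-- Type A case (2) rigidity: the only element of the affine Weyl orbit of the Iwahori
barycenter `q_j = (n + 1 - 2j)/(2n)` with all consecutive gaps in `[0, 1/n]` is the
barycenter itself. -/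
theorem affine_weyl_orbit_barycenter_rigidity
    (n : ℕ) (hn : 2 ≤ n) (σ : Equiv.Perm (Fin n)) (k : Fin n → ℤ)
    (hk : ∑ i, k i = 0)
    (q : Fin n → ℚ)
    (hq : ∀ j : Fin n, q j = ((n : ℚ) - 1 - 2 * ((j : ℕ) : ℚ)) / (2 * n))
    (x : Fin n → ℚ) (hx : ∀ i : Fin n, x i = q (σ i) + (k i : ℚ))
    (hgap : ∀ (i : ℕ) (h : i + 1 < n),
      0 ≤ x ⟨i, by omega⟩ - x ⟨i + 1, h⟩ ∧
        x ⟨i, by omega⟩ - x ⟨i + 1, h⟩ ≤ 1 / n) :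
    ∀ i : Fin n, x i = q i := by
  have hnQ : (0:ℚ) < n := by exact_mod_cast Nat.pos_of_ne_zero (by omega)
  have hnQ' : (n:ℚ) ≠ 0 := ne_of_gt hnQ
  -- Step 1: each gap is exactly 1/n
  have gap1 : ∀ (i : ℕ) (h : i + 1 < n),
      x ⟨i, by omega⟩ - x ⟨i + 1, h⟩ = 1 / n := by
    intro i h
    set i0 : Fin n := ⟨i, by omega⟩ with hi0
    set i1 : Fin n := ⟨i + 1, h⟩ with hi1
    have hne : ((σ i0 : ℕ) : ℤ) ≠ ((σ i1 : ℕ) : ℤ) := by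
      intro hEq
      have h1 : σ i0 = σ i1 := Fin.ext (by exact_mod_cast hEq)
      have h2 : i0 = i1 := σ.injective h1
      have h3 : (i0 : ℕ) = (i1 : ℕ) := congrArg Fin.val h2
      rw [hi0, hi1] at h3
      simp at h3
    set m : ℤ := ((σ i1 : ℕ) : ℤ) - ((σ i0 : ℕ) : ℤ) + n * (k i0 - k i1) with hm
    have hx01 : x i0 - x i1 = (m : ℚ) / n := by
      rw [hx, hx, hq, hq, hm]
      push_cast
      field_simp
      ring
    obtain ⟨h0, h1⟩ := hgap i h
    rw [hx01] at h0 h1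
    have hm0 : (0:ℤ) ≤ m := by
      have : (0:ℚ) ≤ (m:ℚ) := by
        by_contra hcon
        push_neg at hcon
        have : (m:ℚ) / n < 0 := div_neg_of_neg_of_pos hcon hnQ
        linarith
      exact_mod_cast this
    have hm1 : m ≤ 1 := by
      have : (m:ℚ) ≤ 1 := by
        have := (div_le_div_iff₀ hnQ hnQ).mp h1
        nlinarith
      exact_mod_cast this
    have hmne : m ≠ 0 := by
      intro hm0'
      have ha : ((σ i1 : ℕ) : ℤ) < n := by exact_mod_cast (σ i1).is_lt
      have hb : ((σ i0 : ℕ) : ℤ) < n := by exact_mod_cast (σ i0).is_lt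
      have ha0 : (0:ℤ) ≤ ((σ i1 : ℕ) : ℤ) := by positivity
      have hb0 : (0:ℤ) ≤ ((σ i0 : ℕ) : ℤ) := by positivity
      have hnZ : (2:ℤ) ≤ n := by exact_mod_cast hn
      set d : ℤ := k i0 - k i1 with hd
      rw [hm] at hm0'
      rcases lt_trichotomy d 0 with hdlt | hdeq | hdgt
      · have : (n:ℤ) * d ≤ (n:ℤ) * (-1) := by
          apply mul_le_mul_of_nonneg_left (by omega) (by omega)
        omega
      · rw [hdeq] at hm0'; simp at hm0'; omega
      · have : (n:ℤ) * 1 ≤ (n:ℤ) * d := by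
          apply mul_le_mul_of_nonneg_left (by omega) (by omega)
        omega
    have : m = 1 := by omega
    rw [hx01, this]
    norm_num
  -- Step 2: x i = x 0 - i/n
  have hx0 : ∀ (j : ℕ) (hj : j < n), x ⟨j, hj⟩ = x ⟨0, by omega⟩ - (j : ℚ) / n := by
    intro j
    induction j with
    | zero => intro hj; simp
    | succ j ih =>
      intro hj
      have hj' : j < n := by omega
      have := gap1 j hj
      rw [ih hj'] at this
      have heq : x ⟨j + 1, hj⟩ = x ⟨0, by omega⟩ - (j : ℚ) / n - 1 / n := by linarith
      rw [heq]
      push_cast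
      field_simp
      ring
  -- Gauss sum
  have hgauss : ∑ j : Fin n, ((j : ℕ) : ℚ) = (n : ℚ) * ((n : ℚ) - 1) / 2 := by
    rw [Fin.sum_univ_eq_sum_range, ← Nat.cast_sum]
    have h2 := Finset.sum_range_id_mul_two n
    have hc : ((∑ i ∈ Finset.range n, i : ℕ) : ℚ) * 2 = ((n * (n - 1) : ℕ) : ℚ) := by
      exact_mod_cast congrArg (Nat.cast : ℕ → ℚ) h2
    have hc2 : ((n * (n - 1) : ℕ) : ℚ) = (n : ℚ) * ((n : ℚ) - 1) := by
      push_cast [Nat.cast_sub (by omega : 1 ≤ n)]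
      ring
    linarith
  -- Sum of q is 0
  have hsumq : ∑ j : Fin n, q j = 0 := by
    simp only [hq]
    rw [← Finset.sum_div, Finset.sum_sub_distrib, Finset.sum_sub_distrib,
      ← Finset.mul_sum, hgauss]
    simp only [Finset.sum_const, Finset.card_univ, Fintype.card_fin, nsmul_eq_mul]
    field_simp
    ring
  -- Sum of x is 0
  have hsumx : ∑ i : Fin n, x i = 0 := by
    simp only [hx]
    rw [Finset.sum_add_distrib]
    have h1 : ∑ i : Fin n, q (σ i) = ∑ j : Fin n, q j := Equiv.sum_comp σ q
    have h2 : ∑ i : Fin n, ((k i : ℚ)) = ((∑ i : Fin n, k i : ℤ) : ℚ) := by push_cast; rfl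
    rw [h1, hsumq, h2, hk]
    norm_num
  -- Determine x 0
  have hx00 : x ⟨0, by omega⟩ = ((n:ℚ) - 1) / (2 * n) := by
    have hsum2 : ∑ i : Fin n, x i = (n : ℚ) * x ⟨0, by omega⟩ - ((n:ℚ) - 1) / 2 := by
      have : ∀ i : Fin n, x i = x ⟨0, by omega⟩ - ((i : ℕ) : ℚ) / n := by
        intro i
        have := hx0 i.val i.is_lt
        simpa using this
      rw [Finset.sum_congr rfl (fun i _ => this i), Finset.sum_sub_distrib,
        Finset.sum_const, ← Finset.sum_div, hgauss]
      simp [Finset.card_univ]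
      field_simp
    rw [hsumx] at hsum2
    field_simp at hsum2 ⊢
    linarith
  -- Conclude
  intro i
  have := hx0 i.val i.is_lt
  simp only [Fin.eta] at this
  rw [this, hx00, hq]
  field_simp
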